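/- Let c ∈ F_q^n be nonzero with b-shape (N_0, N_1, ..., N_{l+1}), with n_i = |N_i| and t = n_0 + n_{l+1}. If t ≥ b-1 and l ≥ 3 (l odd), then wt_b(c) = Σ_{i=1}^{(l+1)/2} n_{2i-1} + (l+1)(b-1)/2. -/

import Mathlib

/-- The cyclic `b`-weight of `x : ZMod n → F`. -/
noncomputable def wtb {F : Type*} [Zero F] {n : ℕ} (b : ℕ) (x : ZMod n → F) : ℕ :=
  Nat.card {i : ZMod n // ∃ j < b, x (i + (j : ZMod n)) ≠ 0}

/-- Partial sums of block sizes: `blockSum nsize i = n_0 + ⋯ + n_{i-1}`. -/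
def blockSum (nsize : ℕ → ℕ) (i : ℕ) : ℕ := ∑ j ∈ Finset.range i, nsize j

/-- `c` has `b`-shape `(N_0, N_1, …, N_{l+1})`, where block `N_i` consists of the
(0-indexed) positions `[S i, S (i+1))` with `S = blockSum nsize`:
* the block sizes sum to `n`, and the internal blocks are nonempty;
* all coordinates of `c` in the leading block `N_0` and the trailing block
  `N_{l+1}` are zero;
* each odd-indexed block `N_i` (`1 ≤ i ≤ l`) starts and ends with a nonzero
  coordinate and its non-cyclic `(b-1)`-weight equals its length `n_i`, i.e.
  every position in the block has a nonzero coordinate within its window of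
  length `b-1` truncated at the end of the block;
* each even-indexed block `N_i` (`1 ≤ i ≤ l`) is a zero run of length `≥ b-1`. -/
def HasBShape {F : Type*} [Zero F] {n : ℕ} (b l : ℕ) (nsize : ℕ → ℕ)
    (c : ZMod n → F) : Prop :=
  blockSum nsize (l + 2) = n ∧
  (∀ i, 1 ≤ i → i ≤ l → 1 ≤ nsize i) ∧
  (∀ p, p < nsize 0 → c (p : ZMod n) = 0) ∧
  (∀ p, blockSum nsize (l + 1) ≤ p → p < n → c (p : ZMod n) = 0) ∧
  (∀ i, 1 ≤ i → i ≤ l → Odd i →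
    c ((blockSum nsize i : ℕ) : ZMod n) ≠ 0 ∧
    c ((blockSum nsize (i + 1) - 1 : ℕ) : ZMod n) ≠ 0 ∧
    (∀ p, blockSum nsize i ≤ p → p < blockSum nsize (i + 1) →
      ∃ j < b - 1, p + j < blockSum nsize (i + 1) ∧ c ((p + j : ℕ) : ZMod n) ≠ 0)) ∧
  (∀ i, 1 ≤ i → i ≤ l → Even i →
    b - 1 ≤ nsize i ∧
    ∀ p, blockSum nsize i ≤ p → p < blockSum nsize (i + 1) → c ((p : ℕ) : ZMod n) = 0)

lemma blockSum_succ' (nsize : ℕ → ℕ) (i : ℕ) :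
    blockSum nsize (i + 1) = blockSum nsize i + nsize i :=
  Finset.sum_range_succ _ _

lemma blockSum_mono' (nsize : ℕ → ℕ) : Monotone (blockSum nsize) :=
  fun _ _ h => Finset.sum_le_sum_of_subset (Finset.range_subset_range.2 h)

/-- A position with a nonzero coordinate lies in one of the odd (dense) blocks. -/
lemma block_locate {F : Type*} [Field F] {n : ℕ} [NeZero n] (b l : ℕ)
    (nsize : ℕ → ℕ) (c : ZMod n → F) (hshape : HasBShape b l nsize c)
    (q : ℕ) (hq : q < n) (hne : c ((q : ℕ) : ZMod n) ≠ 0) :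
    ∃ k, 2 * k + 1 ≤ l ∧ blockSum nsize (2 * k + 1) ≤ q ∧
      q < blockSum nsize (2 * k + 2) := by
  classical
  obtain ⟨hn, hpos, h0, htail, hdense, heven⟩ := hshape
  set S := blockSum nsize with hSdef
  set i := Nat.findGreatest (fun i => S i ≤ q) (l + 1) with hi
  have hS0 : S 0 = 0 := by simp [hSdef, blockSum]
  have hS1 : S 1 = nsize 0 := by simp [hSdef, blockSum]
  have hile : i ≤ l + 1 := Nat.findGreatest_le _
  have hSi : S i ≤ q :=
    Nat.findGreatest_spec (P := fun i => S i ≤ q) (Nat.zero_le _) (by simp [hS0])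
  have hil : i ≤ l := by
    by_contra hcon
    have hieq : i = l + 1 := by omega
    exact hne (htail q (by rw [← hieq]; exact hSi) hq)
  have hub : q < S (i + 1) := by
    by_contra hcon
    push_neg at hcon
    exact Nat.findGreatest_is_greatest (P := fun i => S i ≤ q)
      (Nat.lt_succ_self i) (by omega) hcon
  have hi1 : 1 ≤ i := by
    by_contra hcon
    have hieq : i = 0 := by omega
    rw [hieq] at hub
    exact hne (h0 q (by rw [← hS1]; exact hub))
  rcases Nat.even_or_odd i with he | ho
  · exact absurd ((heven i hi1 hil he).2 q hSi hub) hne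
  · obtain ⟨k, hk⟩ := ho
    refine ⟨k, by omega, ?_, ?_⟩
    · rw [show 2 * k + 1 = i from hk.symm]; exact hSi
    · rw [show 2 * k + 2 = i + 1 by omega]; exact hub

set_option maxHeartbeats 1000000 in
/-- If `t = n_0 + n_{l+1} ≥ b - 1` and `l ≥ 3` is odd, then
`wt_b(c) = ∑_{i=1}^{(l+1)/2} n_{2i-1} + (l+1)(b-1)/2`. -/
theorem wtb_of_bshape_case4
    {F : Type*} [Field F] {n : ℕ} [NeZero n] (b l : ℕ) (hb : 2 ≤ b)
    (nsize : ℕ → ℕ) (c : ZMod n → F) (hc : c ≠ 0)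
    (hshape : HasBShape b l nsize c)
    (hl : 3 ≤ l) (hlodd : Odd l) (ht : b - 1 ≤ nsize 0 + nsize (l + 1)) :
    wtb b c = (∑ i ∈ Finset.range ((l + 1) / 2), nsize (2 * i + 1)) +
      (l + 1) * (b - 1) / 2 := by
  classical
  have hloc := block_locate b l nsize c hshape
  obtain ⟨hn, hpos, h0, htail, hdense, heven⟩ := hshape
  set S := blockSum nsize with hSdef
  obtain ⟨m', hm'⟩ := hlodd
  set m := m' + 1 with hm
  have hlm : l = 2 * m - 1 := by omega
  have hS1 : S 1 = nsize 0 := by simp [hSdef, blockSum]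
  have hS0 : S 0 = 0 := by simp [hSdef, blockSum]
  have hsucc : ∀ i, S (i + 1) = S i + nsize i := blockSum_succ' nsize
  have hmono : Monotone S := blockSum_mono' nsize
  -- basic size facts
  have hb2 : b - 1 ≤ nsize 2 := (heven 2 (by omega) (by omega) ⟨1, rfl⟩).1
  have hbn : b ≤ n := by
    have h1 : 1 ≤ nsize 1 := hpos 1 le_rfl (by omega)
    have h3 : 1 ≤ nsize 3 := hpos 3 (by omega) (by omega)
    have h4 : S 4 ≤ S (l + 2) := hmono (by omega)
    have e1 : S 1 = S 0 + nsize 0 := hsucc 0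
    have e2 : S 2 = S 1 + nsize 1 := hsucc 1
    have e3 : S 3 = S 2 + nsize 2 := hsucc 2
    have e4 : S 4 = S 3 + nsize 3 := hsucc 3
    omega
  have hSl1 : S (l + 2) = S (l + 1) + nsize (l + 1) := hsucc _
  -- the set of counted positions, as natural numbers
  set T : Finset ℕ := Finset.Ico (n + nsize 0 - (b - 1)) n ∪
      (Finset.range m).biUnion
        (fun k => Finset.Ico (S (2 * k + 1) - (b - 1)) (S (2 * k + 2))) with hT
  have hmemT : ∀ p : ℕ, p ∈ T ↔
      ((n + nsize 0 - (b - 1) ≤ p ∧ p < n) ∨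
        ∃ k < m, S (2 * k + 1) - (b - 1) ≤ p ∧ p < S (2 * k + 2)) := by
    intro p
    simp only [hT, Finset.mem_union, Finset.mem_Ico, Finset.mem_biUnion,
      Finset.mem_range]
  -- the key characterization
  have hiff : ∀ p : ℕ, p < n →
      ((∃ j < b, c ((p : ZMod n) + (j : ZMod n)) ≠ 0) ↔ p ∈ T) := by
    intro p hp
    constructor
    · rintro ⟨j, hj, hne⟩
      by_cases hpj : p + j < n
      · have hcast : (p : ZMod n) + (j : ZMod n) = ((p + j : ℕ) : ZMod n) := by
          push_cast; ring
        rw [hcast] at hne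
        obtain ⟨k, hkl, h1, h2⟩ := hloc (p + j) hpj hne
        rw [hmemT]
        exact Or.inr ⟨k, by omega, by omega, by omega⟩
      · have hqlt : p + j - n < n := by omega
        have hcast : (p : ZMod n) + (j : ZMod n) = ((p + j - n : ℕ) : ZMod n) := by
          have he : p + j = (p + j - n) + n := by omega
          calc (p : ZMod n) + (j : ZMod n) = ((p + j : ℕ) : ZMod n) := by push_cast; ring
            _ = (((p + j - n) + n : ℕ) : ZMod n) := by rw [← he]
            _ = ((p + j - n : ℕ) : ZMod n) := by push_cast [ZMod.natCast_self]; ring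
        rw [hcast] at hne
        obtain ⟨k, hkl, h1, h2⟩ := hloc (p + j - n) hqlt hne
        have hS1k : S 1 ≤ S (2 * k + 1) := hmono (by omega)
        rw [hmemT]
        exact Or.inl ⟨by omega, hp⟩
    · intro hpT
      rw [hmemT] at hpT
      rcases hpT with ⟨h1, h2⟩ | ⟨k, hk, h1, h2⟩
      · refine ⟨n + nsize 0 - p, by omega, ?_⟩
        have hne := (hdense 1 le_rfl (by omega) odd_one).1
        have hcast : (p : ZMod n) + ((n + nsize 0 - p : ℕ) : ZMod n)
            = ((S 1 : ℕ) : ZMod n) := by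
          have he : p + (n + nsize 0 - p) = nsize 0 + n := by omega
          calc (p : ZMod n) + ((n + nsize 0 - p : ℕ) : ZMod n)
              = ((p + (n + nsize 0 - p) : ℕ) : ZMod n) := by push_cast; ring
            _ = ((nsize 0 + n : ℕ) : ZMod n) := by rw [he]
            _ = ((S 1 : ℕ) : ZMod n) := by rw [hS1]; push_cast [ZMod.natCast_self]; ring
        rw [hcast]
        exact hne
      · by_cases hps : p < S (2 * k + 1)
        · refine ⟨S (2 * k + 1) - p, by omega, ?_⟩
          have hne := (hdense (2 * k + 1) (by omega) (by omega) ⟨k, rfl⟩).1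
          have hcast : (p : ZMod n) + ((S (2 * k + 1) - p : ℕ) : ZMod n)
              = ((S (2 * k + 1) : ℕ) : ZMod n) := by
            have he : p + (S (2 * k + 1) - p) = S (2 * k + 1) := by omega
            calc (p : ZMod n) + ((S (2 * k + 1) - p : ℕ) : ZMod n)
                = ((p + (S (2 * k + 1) - p) : ℕ) : ZMod n) := by push_cast; ring
              _ = ((S (2 * k + 1) : ℕ) : ZMod n) := by rw [he]
          rw [hcast]
          exact hne
        · obtain ⟨j, hjb, hjlt, hne⟩ :=
            (hdense (2 * k + 1) (by omega) (by omega) ⟨k, rfl⟩).2.2 p (by omega) h2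
          refine ⟨j, by omega, ?_⟩
          have hcast : (p : ZMod n) + ((j : ℕ) : ZMod n) = ((p + j : ℕ) : ZMod n) := by
            push_cast; ring
          rw [hcast]
          exact hne
  -- wtb equals the cardinality of T
  have hwtb : wtb b c = T.card := by
    rw [wtb, Nat.card_eq_fintype_card, Fintype.card_subtype]
    rw [← Finset.card_image_of_injective
      (Finset.filter (fun i : ZMod n => ∃ j < b, c (i + (j : ZMod n)) ≠ 0) Finset.univ)
      (ZMod.val_injective n)]
    congr 1
    ext x
    simp only [Finset.mem_image, Finset.mem_filter, Finset.mem_univ, true_and]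
    constructor
    · rintro ⟨a, ha, rfl⟩
      have hav : ((a.val : ℕ) : ZMod n) = a := ZMod.natCast_rightInverse a
      apply (hiff a.val (ZMod.val_lt a)).1
      rw [hav]
      exact ha
    · intro hx
      have hxlt : x < n := by
        rw [hmemT] at hx
        rcases hx with ⟨_, h⟩ | ⟨k, hk, _, h2⟩
        · exact h
        · have : S (2 * k + 2) ≤ S (l + 2) := hmono (by omega)
          omega
      refine ⟨(x : ZMod n), ?_, ZMod.val_cast_of_lt hxlt⟩
      have hxv : (((x : ZMod n).val : ℕ) : ZMod n) = (x : ZMod n) :=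
        ZMod.natCast_rightInverse _
      exact (hiff x hxlt).2 hx
  -- disjointness
  have hkey : ∀ k k', k < k' → k' < m → S (2 * k + 2) + (b - 1) ≤ S (2 * k' + 1) := by
    intro k k' hkk hk'
    have h1 : b - 1 ≤ nsize (2 * k + 2) := (heven (2 * k + 2) (by omega) (by omega) ⟨k + 1, by ring⟩).1
    have h2 : S (2 * k + 3) ≤ S (2 * k' + 1) := hmono (by omega)
    have h3 : S (2 * k + 3) = S (2 * k + 2) + nsize (2 * k + 2) := hsucc _
    omega
  have hpair : (↑(Finset.range m) : Set ℕ).Pairwise fun k k' =>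
      Disjoint (Finset.Ico (S (2 * k + 1) - (b - 1)) (S (2 * k + 2)))
        (Finset.Ico (S (2 * k' + 1) - (b - 1)) (S (2 * k' + 2))) := by
    intro k hk k' hk' hne
    simp only [Finset.coe_range, Set.mem_Iio] at hk hk'
    rw [Finset.disjoint_left]
    intro x hx hx'
    rw [Finset.mem_Ico] at hx hx'
    rcases Nat.lt_or_ge k k' with h | h
    · have := hkey k k' h hk'
      omega
    · have hkk : k' < k := by omega
      have := hkey k' k hkk hk
      omega
  have hdisj : Disjoint (Finset.Ico (n + nsize 0 - (b - 1)) n)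
      ((Finset.range m).biUnion
        (fun k => Finset.Ico (S (2 * k + 1) - (b - 1)) (S (2 * k + 2)))) := by
    rw [Finset.disjoint_left]
    intro x hx hx'
    rw [Finset.mem_Ico] at hx
    rw [Finset.mem_biUnion] at hx'
    obtain ⟨k, hk, hxk⟩ := hx'
    rw [Finset.mem_range] at hk
    rw [Finset.mem_Ico] at hxk
    have h1 : S (2 * k + 2) ≤ S (l + 1) := hmono (by omega)
    omega
  -- cardinality computation
  have hcardT : T.card = (n - (n + nsize 0 - (b - 1))) +
      ∑ k ∈ Finset.range m, (S (2 * k + 2) - (S (2 * k + 1) - (b - 1))) := by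
    rw [hT, Finset.card_union_of_disjoint hdisj, Finset.card_biUnion hpair]
    simp [Nat.card_Ico]
  have hterm : ∀ k ∈ Finset.range m,
      S (2 * k + 2) - (S (2 * k + 1) - (b - 1))
        = nsize (2 * k + 1) + (S (2 * k + 1) - (S (2 * k + 1) - (b - 1))) := by
    intro k _
    have h2 : S (2 * k + 2) = S (2 * k + 1) + nsize (2 * k + 1) := hsucc (2 * k + 1)
    omega
  have hsum1 : ∑ k ∈ Finset.range m, (S (2 * k + 2) - (S (2 * k + 1) - (b - 1)))
      = (∑ k ∈ Finset.range m, nsize (2 * k + 1)) +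
        ∑ k ∈ Finset.range m, (S (2 * k + 1) - (S (2 * k + 1) - (b - 1))) := by
    rw [Finset.sum_congr rfl hterm, Finset.sum_add_distrib]
  have hg : ∑ k ∈ Finset.range m, (S (2 * k + 1) - (S (2 * k + 1) - (b - 1)))
      = (nsize 0 - (nsize 0 - (b - 1))) + m' * (b - 1) := by
    rw [hm, Finset.sum_range_succ']
    have hconst : ∀ k ∈ Finset.range m',
        S (2 * (k + 1) + 1) - (S (2 * (k + 1) + 1) - (b - 1)) = b - 1 := by
      intro k _
      have h1 : S 3 ≤ S (2 * (k + 1) + 1) := hmono (by omega)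
      have h2 : S 3 = S 2 + nsize 2 := hsucc _
      omega
    rw [Finset.sum_congr rfl hconst, Finset.sum_const, Finset.card_range, smul_eq_mul]
    have h0' : S (2 * 0 + 1) = nsize 0 := by rw [show 2 * 0 + 1 = 1 by rfl]; exact hS1
    rw [h0']
    ring
  -- final arithmetic
  have hhalf : (l + 1) / 2 = m := by omega
  have hmul : (l + 1) * (b - 1) / 2 = m' * (b - 1) + (b - 1) := by
    rw [show l + 1 = 2 * m from by omega, mul_assoc,
      Nat.mul_div_cancel_left _ (by norm_num : (0:ℕ) < 2), hm, add_mul, one_mul]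
  rw [hwtb, hcardT, hsum1, hg, hhalf, hmul]
  generalize m' * (b - 1) = K
  omega
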